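/- With the pose-graph data and the surrogate H built at a base configuration X⁰ = (t⁰, R⁰), there exists a symmetric positive semidefinite matrix Ω̃ ∈ ℝ^{(d+1)n×(d+1)n} such that for every configuration X = (t, R), identifying X with the matrix [t₁ ⋯ t_n R₁ ⋯ R_n] ∈ ℝ^{d×(d+1)n}, H(X) = F(X⁰) + ⟨∇F(X⁰), X − X⁰⟩ + (1/2)tr((X − X⁰) Ω̃ (X − X⁰)ᵀ), where ∇F(X⁰) is the (Fréchet) gradient of F at X⁰ and ⟨·,·⟩ is the trace inner product. -/

import Mathlib

open Matrix

attribute [local instance] Matrix.frobeniusNormedAddCommGroup Matrix.frobeniusNormedSpace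

noncomputable section PGO

/-- Column index type for the configuration matrix `[t₁ ⋯ t_n R₁ ⋯ R_n] ∈ ℝ^{d×(d+1)n}`:
one column for each translation `t_i`, and `d` columns for each rotation `R_i`. -/
abbrev PGOCols (n d : ℕ) := Fin n ⊕ Fin n × Fin d

/-- The translation `t_i` (as a `d × 1` matrix) extracted from a configuration matrix. -/
def tPart {n d : ℕ} (X : Matrix (Fin d) (PGOCols n d) ℝ) (i : Fin n) :
    Matrix (Fin d) (Fin 1) ℝ :=
  Matrix.of fun r _ => X r (Sum.inl i)

/-- The rotation block `R_i` (as a `d × d` matrix) extracted from a configuration matrix. -/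
def RPart {n d : ℕ} (X : Matrix (Fin d) (PGOCols n d) ℝ) (i : Fin n) :
    Matrix (Fin d) (Fin d) ℝ :=
  Matrix.of fun r c => X r (Sum.inr (i, c))

/-- The PGO objective
`F(X) = Σ_e (1/2)(κ_e‖R_{s(e)}R̃_e − R_{h(e)}‖² + τ_e‖R_{s(e)}t̃_e + t_{s(e)} − t_{h(e)}‖²)`. -/
def pgoF {n d : ℕ} {E : Type*} [Fintype E] (s h : E → Fin n) (κ τ : E → ℝ)
    (Rm : E → Matrix (Fin d) (Fin d) ℝ) (tm : E → Matrix (Fin d) (Fin 1) ℝ)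
    (X : Matrix (Fin d) (PGOCols n d) ℝ) : ℝ :=
  ∑ e, (1 / 2) * (κ e * ‖RPart X (s e) * Rm e - RPart X (h e)‖ ^ 2
    + τ e * ‖RPart X (s e) * tm e + tPart X (s e) - tPart X (h e)‖ ^ 2)

/-- `P_e = (1/2)R⁰_{s(e)}R̃_e + (1/2)R⁰_{h(e)}` built at the base configuration `X⁰`. -/
def pgoP {n d : ℕ} {E : Type*} (s h : E → Fin n)
    (Rm : E → Matrix (Fin d) (Fin d) ℝ)
    (X0 : Matrix (Fin d) (PGOCols n d) ℝ) (e : E) : Matrix (Fin d) (Fin d) ℝ :=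
  (1 / 2 : ℝ) • (RPart X0 (s e) * Rm e) + (1 / 2 : ℝ) • RPart X0 (h e)

/-- `p_e = (1/2)R⁰_{s(e)}t̃_e + (1/2)t⁰_{s(e)} + (1/2)t⁰_{h(e)}` built at the base `X⁰`. -/
def pgop {n d : ℕ} {E : Type*} (s h : E → Fin n)
    (tm : E → Matrix (Fin d) (Fin 1) ℝ)
    (X0 : Matrix (Fin d) (PGOCols n d) ℝ) (e : E) : Matrix (Fin d) (Fin 1) ℝ :=
  (1 / 2 : ℝ) • (RPart X0 (s e) * tm e) + (1 / 2 : ℝ) • tPart X0 (s e)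
    + (1 / 2 : ℝ) • tPart X0 (h e)

/-- The surrogate
`H(X) = Σ_e (κ_e(‖R_{s(e)}R̃_e − P_e‖² + ‖R_{h(e)} − P_e‖²)
        + τ_e(‖R_{s(e)}t̃_e + t_{s(e)} − p_e‖² + ‖t_{h(e)} − p_e‖²))`. -/
def pgoH {n d : ℕ} {E : Type*} [Fintype E] (s h : E → Fin n) (κ τ : E → ℝ)
    (Rm : E → Matrix (Fin d) (Fin d) ℝ) (tm : E → Matrix (Fin d) (Fin 1) ℝ)
    (X0 X : Matrix (Fin d) (PGOCols n d) ℝ) : ℝ :=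
  ∑ e, (κ e * (‖RPart X (s e) * Rm e - pgoP s h Rm X0 e‖ ^ 2
        + ‖RPart X (h e) - pgoP s h Rm X0 e‖ ^ 2)
    + τ e * (‖RPart X (s e) * tm e + tPart X (s e) - pgop s h tm X0 e‖ ^ 2
        + ‖tPart X (h e) - pgop s h tm X0 e‖ ^ 2))

namespace PGOAux

lemma fnorm_sq {m k : Type*} [Fintype m] [Fintype k] (M : Matrix m k ℝ) :
    ‖M‖ ^ 2 = ∑ i, ∑ j, M i j ^ 2 := by
  have hnn : (0:ℝ) ≤ ∑ i, ∑ j, ‖M i j‖ ^ (2:ℝ) := by positivity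
  rw [Matrix.frobenius_norm_def, ← Real.rpow_natCast _ 2, ← Real.rpow_mul hnn]
  norm_num

/-- entrywise inner product -/
def ip {m k : Type*} [Fintype m] [Fintype k] (M N : Matrix m k ℝ) : ℝ :=
  ∑ i, ∑ j, M i j * N i j

lemma norm_add_sq {m k : Type*} [Fintype m] [Fintype k] (M N : Matrix m k ℝ) :
    ‖M + N‖ ^ 2 = ‖M‖ ^ 2 + 2 * ip M N + ‖N‖ ^ 2 := by
  simp only [fnorm_sq, ip, Matrix.add_apply, Finset.mul_sum]
  rw [← Finset.sum_add_distrib, ← Finset.sum_add_distrib]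
  refine Finset.sum_congr rfl fun i _ => ?_
  rw [← Finset.sum_add_distrib, ← Finset.sum_add_distrib]
  exact Finset.sum_congr rfl fun j _ => by ring

lemma norm_smul_sq {m k : Type*} [Fintype m] [Fintype k] (t : ℝ) (M : Matrix m k ℝ) :
    ‖t • M‖ ^ 2 = t ^ 2 * ‖M‖ ^ 2 := by
  rw [norm_smul, mul_pow, Real.norm_eq_abs, sq_abs]

lemma ip_smul_right {m k : Type*} [Fintype m] [Fintype k] (t : ℝ) (M N : Matrix m k ℝ) :
    ip M (t • N) = t * ip M N := by
  simp only [ip, Matrix.smul_apply, smul_eq_mul, Finset.mul_sum]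
  exact Finset.sum_congr rfl fun i _ => Finset.sum_congr rfl fun j _ => by ring

lemma ip_eq_trace {m k : Type*} [Fintype m] [Fintype k] (M N : Matrix m k ℝ) :
    Matrix.trace (Mᵀ * N) = ip M N := by
  simp only [Matrix.trace, Matrix.diag, Matrix.mul_apply, Matrix.transpose_apply, ip]
  rw [Finset.sum_comm]

lemma ip_mul_right {m k l : Type*} [Fintype m] [Fintype k] [Fintype l]
    (M : Matrix m k ℝ) (V : Matrix m l ℝ) (N : Matrix l k ℝ) :
    ip M (V * N) = ip (M * Nᵀ) V := by
  simp only [ip, Matrix.mul_apply, Matrix.transpose_apply, Finset.mul_sum, Finset.sum_mul]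
  refine Finset.sum_congr rfl fun i _ => ?_
  rw [Finset.sum_comm]
  exact Finset.sum_congr rfl fun q _ => Finset.sum_congr rfl fun j _ => by ring

/-- ip as linear in the first argument -/
def ipl {m k : Type*} [Fintype m] [Fintype k] (V : Matrix m k ℝ) :
    Matrix m k ℝ →ₗ[ℝ] ℝ where
  toFun M := ip M V
  map_add' M N := by
    simp only [ip, Matrix.add_apply, add_mul, ← Finset.sum_add_distrib]
  map_smul' t M := by
    simp only [ip, Matrix.smul_apply, smul_eq_mul, RingHom.id_apply, Finset.mul_sum]
    exact Finset.sum_congr rfl fun i _ => Finset.sum_congr rfl fun j _ => by ring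

lemma trace_mul_transpose_self {m k : Type*} [Fintype m] [Fintype k] (W : Matrix m k ℝ) :
    Matrix.trace (W * Wᵀ) = ‖W‖ ^ 2 := by
  rw [fnorm_sq]
  simp only [Matrix.trace, Matrix.diag, Matrix.mul_apply, Matrix.transpose_apply, sq]

lemma tr_conj_sq {m k l : Type*} [Fintype m] [Fintype k] [Fintype l]
    (V : Matrix m l ℝ) (M : Matrix l k ℝ) :
    Matrix.trace (V * (M * Mᵀ) * Vᵀ) = ‖V * M‖ ^ 2 := by
  rw [show V * (M * Mᵀ) * Vᵀ = (V * M) * (V * M)ᵀ by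
    rw [Matrix.transpose_mul]; simp only [Matrix.mul_assoc]]
  exact trace_mul_transpose_self _

lemma psd_mul_transpose {l k : Type*} [Fintype l] [Fintype k] [DecidableEq l]
    (M : Matrix l k ℝ) : (M * Mᵀ).PosSemidef := by
  simpa [Matrix.conjTranspose_eq_transpose_of_trivial] using
    Matrix.posSemidef_self_mul_conjTranspose M

lemma psd_add {l : Type*} [Fintype l] {A B : Matrix l l ℝ}
    (hA : A.PosSemidef) (hB : B.PosSemidef) : (A + B).PosSemidef := by
  refine ⟨hA.1.add hB.1, fun x => ?_⟩
  simpa [mul_add, add_mul, Finsupp.sum_add] using add_nonneg (hA.2 x) (hB.2 x)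

lemma psd_smul {l : Type*} [Fintype l] {A : Matrix l l ℝ} (hA : A.PosSemidef)
    {c : ℝ} (hc : 0 ≤ c) : (c • A).PosSemidef := by
  refine ⟨?_, fun x => ?_⟩
  · unfold Matrix.IsHermitian
    rw [Matrix.conjTranspose_smul, hA.1]
    simp
  · have hc' : ∀ (i j : l) (xi xj : ℝ), star xi * (c • A) i j * xj = c * (star xi * A i j * xj) :=
      fun _ _ _ _ => by simp only [Matrix.smul_apply, smul_eq_mul]; ring
    simp only [hc', ← Finsupp.mul_sum]
    exact mul_nonneg hc (hA.2 x)

lemma psd_sum {l E : Type*} [Fintype l] [Fintype E] (f : E → Matrix l l ℝ)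
    (hf : ∀ e, (f e).PosSemidef) : (∑ e, f e).PosSemidef := by
  classical
  refine Finset.sum_induction f Matrix.PosSemidef (fun a b ha hb => psd_add ha hb)
    Matrix.PosSemidef.zero (fun e _ => hf e)

lemma diff_entry {n d : ℕ} (i : Fin d) (q : PGOCols n d) :
    Differentiable ℝ (fun X : Matrix (Fin d) (PGOCols n d) ℝ => X i q) := by
  let L : Matrix (Fin d) (PGOCols n d) ℝ →ₗ[ℝ] ℝ :=
    { toFun := fun X => X i q, map_add' := fun _ _ => rfl, map_smul' := fun _ _ => rfl }
  exact L.toContinuousLinearMap.differentiable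

section EdgeMatrices

variable {n d : ℕ} {E : Type*} [Fintype E]

def Jr (i : Fin n) : Matrix (PGOCols n d) (Fin d) ℝ :=
  Matrix.of fun q c => if q = Sum.inr (i, c) then 1 else 0

def Jt (i : Fin n) : Matrix (PGOCols n d) (Fin 1) ℝ :=
  Matrix.of fun q _ => if q = Sum.inl i then 1 else 0

lemma RPart_eq (X : Matrix (Fin d) (PGOCols n d) ℝ) (i : Fin n) :
    RPart X i = X * (Jr i : Matrix (PGOCols n d) (Fin d) ℝ) := by
  ext r c
  simp [RPart, Jr, Matrix.mul_apply]

lemma tPart_eq (X : Matrix (Fin d) (PGOCols n d) ℝ) (i : Fin n) :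
    tPart X i = X * (Jt i : Matrix (PGOCols n d) (Fin 1) ℝ) := by
  ext r c
  simp [tPart, Jt, Matrix.mul_apply]

end EdgeMatrices




section Main

variable {n d : ℕ} {E : Type*} [Fintype E]

def MA (s h : E → Fin n) (Rm : E → Matrix (Fin d) (Fin d) ℝ) (e : E) :
    Matrix (PGOCols n d) (Fin d) ℝ := (Jr (s e) : Matrix (PGOCols n d) (Fin d) ℝ) * Rm e - Jr (h e)

def MS (s h : E → Fin n) (Rm : E → Matrix (Fin d) (Fin d) ℝ) (e : E) :
    Matrix (PGOCols n d) (Fin d) ℝ := (Jr (s e) : Matrix (PGOCols n d) (Fin d) ℝ) * Rm e + Jr (h e)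

def MB (s h : E → Fin n) (tm : E → Matrix (Fin d) (Fin 1) ℝ) (e : E) :
    Matrix (PGOCols n d) (Fin 1) ℝ := (Jr (s e) : Matrix (PGOCols n d) (Fin d) ℝ) * tm e + Jt (s e) - Jt (h e)

def MT (s h : E → Fin n) (tm : E → Matrix (Fin d) (Fin 1) ℝ) (e : E) :
    Matrix (PGOCols n d) (Fin 1) ℝ := (Jr (s e) : Matrix (PGOCols n d) (Fin d) ℝ) * tm e + Jt (s e) + Jt (h e)

variable (s h : E → Fin n) (κ τ : E → ℝ)
  (Rm : E → Matrix (Fin d) (Fin d) ℝ) (tm : E → Matrix (Fin d) (Fin 1) ℝ)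

lemma mulMA (X : Matrix (Fin d) (PGOCols n d) ℝ) (e : E) :
    RPart X (s e) * Rm e - RPart X (h e) = X * MA s h Rm e := by
  simp [MA, RPart_eq, Matrix.mul_sub, ← Matrix.mul_assoc]

lemma mulMB (X : Matrix (Fin d) (PGOCols n d) ℝ) (e : E) :
    RPart X (s e) * tm e + tPart X (s e) - tPart X (h e) = X * MB s h tm e := by
  simp [MB, RPart_eq, tPart_eq, Matrix.mul_sub, Matrix.mul_add, ← Matrix.mul_assoc]

lemma mulMS (X X0 : Matrix (Fin d) (PGOCols n d) ℝ) (e : E) :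
    (RPart X (s e) * Rm e - RPart X0 (s e) * Rm e) + (RPart X (h e) - RPart X0 (h e))
      = (X - X0) * MS s h Rm e := by
  simp only [MS, RPart_eq, Matrix.mul_add, Matrix.sub_mul, ← Matrix.mul_assoc] <;> abel

lemma mulMT (X X0 : Matrix (Fin d) (PGOCols n d) ℝ) (e : E) :
    ((RPart X (s e) * tm e + tPart X (s e)) - (RPart X0 (s e) * tm e + tPart X0 (s e)))
        + (tPart X (h e) - tPart X0 (h e))
      = (X - X0) * MT s h tm e := by
  simp only [MT, RPart_eq, tPart_eq, Matrix.mul_add, Matrix.sub_mul, ← Matrix.mul_assoc] <;> abel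

lemma pgoF_eq (X : Matrix (Fin d) (PGOCols n d) ℝ) :
    pgoF s h κ τ Rm tm X
      = ∑ e, (1/2) * (κ e * ‖X * MA s h Rm e‖^2 + τ e * ‖X * MB s h tm e‖^2) := by
  unfold pgoF
  exact Finset.sum_congr rfl fun e _ => by rw [mulMA, mulMB]

def LinF (X0 V : Matrix (Fin d) (PGOCols n d) ℝ) : ℝ :=
  ∑ e, (κ e * ip (X0 * MA s h Rm e) (V * MA s h Rm e)
      + τ e * ip (X0 * MB s h tm e) (V * MB s h tm e))

lemma pgoF_expand (X0 V : Matrix (Fin d) (PGOCols n d) ℝ) :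
    pgoF s h κ τ Rm tm (X0 + V)
      = pgoF s h κ τ Rm tm X0 + LinF s h κ τ Rm tm X0 V + pgoF s h κ τ Rm tm V := by
  simp only [pgoF_eq, LinF, Matrix.add_mul]
  rw [← Finset.sum_add_distrib, ← Finset.sum_add_distrib]
  refine Finset.sum_congr rfl fun e _ => ?_
  rw [norm_add_sq, norm_add_sq]; ring

lemma pgoF_smul (t : ℝ) (V : Matrix (Fin d) (PGOCols n d) ℝ) :
    pgoF s h κ τ Rm tm (t • V) = t^2 * pgoF s h κ τ Rm tm V := by
  simp only [pgoF_eq, Matrix.smul_mul, norm_smul_sq, Finset.mul_sum]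
  exact Finset.sum_congr rfl fun e _ => by ring

lemma LinF_smul (X0 : Matrix (Fin d) (PGOCols n d) ℝ) (t : ℝ)
    (V : Matrix (Fin d) (PGOCols n d) ℝ) :
    LinF s h κ τ Rm tm X0 (t • V) = t * LinF s h κ τ Rm tm X0 V := by
  simp only [LinF, Matrix.smul_mul, ip_smul_right, Finset.mul_sum]
  exact Finset.sum_congr rfl fun e _ => by ring

lemma pgoF_diff : Differentiable ℝ (pgoF s h κ τ Rm tm) := by
  have hrw : pgoF s h κ τ Rm tm = fun X =>
      ∑ e, (1/2) * (κ e * (∑ i, ∑ j, (∑ q, X i q * MA s h Rm e q j)^2)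
        + τ e * (∑ i, ∑ j, (∑ q, X i q * MB s h tm e q j)^2)) := by
    funext X
    rw [pgoF_eq]
    exact Finset.sum_congr rfl fun e _ => by
      rw [fnorm_sq, fnorm_sq]; simp only [Matrix.mul_apply]
  rw [hrw]
  refine Differentiable.fun_sum fun e _ => Differentiable.const_mul (Differentiable.add ?_ ?_) _ <;>
  · refine Differentiable.const_mul ?_ _
    refine Differentiable.fun_sum fun i _ => Differentiable.fun_sum fun j _ => ?_
    exact Differentiable.pow (Differentiable.fun_sum fun q _ => (diff_entry i q).mul_const _) 2

lemma pgoF_fderiv (X0 V : Matrix (Fin d) (PGOCols n d) ℝ) :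
    fderiv ℝ (pgoF s h κ τ Rm tm) X0 V = LinF s h κ τ Rm tm X0 V := by
  have hdiff := pgoF_diff s h κ τ Rm tm
  have hg : HasDerivAt (fun t : ℝ => X0 + t • V) V 0 := by
    have hg' := ((hasDerivAt_id (0:ℝ)).smul_const V).const_add X0
    simp only [id, one_smul] at hg'
    exact hg'
  have h1 : HasDerivAt (fun t : ℝ => pgoF s h κ τ Rm tm (X0 + t • V))
      (fderiv ℝ (pgoF s h κ τ Rm tm) X0 V) 0 := by
    have h0 : X0 + (0:ℝ) • V = X0 := by simp
    have := ((hdiff (X0 + (0:ℝ) • V)).hasFDerivAt).comp_hasDerivAt 0 hg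
    rw [h0] at this
    exact this
  have ha : HasDerivAt (fun t : ℝ => pgoF s h κ τ Rm tm X0 + t * LinF s h κ τ Rm tm X0 V)
      (LinF s h κ τ Rm tm X0 V) 0 := by
    simpa using ((hasDerivAt_id (0:ℝ)).mul_const (LinF s h κ τ Rm tm X0 V)).const_add
      (pgoF s h κ τ Rm tm X0)
  have hb : HasDerivAt (fun t : ℝ => t^2 * pgoF s h κ τ Rm tm V) 0 0 := by
    simpa using (hasDerivAt_pow 2 (0:ℝ)).mul_const (pgoF s h κ τ Rm tm V)
  have h2 : HasDerivAt (fun t : ℝ => pgoF s h κ τ Rm tm X0 + t * LinF s h κ τ Rm tm X0 V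
      + t^2 * pgoF s h κ τ Rm tm V) (LinF s h κ τ Rm tm X0 V) 0 := by
    have h2' := ha.add hb
    simp only [add_zero] at h2'
    exact h2'
  have heq : (fun t : ℝ => pgoF s h κ τ Rm tm (X0 + t • V))
      = fun t : ℝ => pgoF s h κ τ Rm tm X0 + t * LinF s h κ τ Rm tm X0 V
          + t^2 * pgoF s h κ τ Rm tm V := by
    funext t
    rw [pgoF_expand, LinF_smul, pgoF_smul]
  rw [heq] at h1
  exact h1.unique h2

def Gmat (X0 : Matrix (Fin d) (PGOCols n d) ℝ) : Matrix (Fin d) (PGOCols n d) ℝ :=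
  ∑ e, (κ e • (X0 * MA s h Rm e * (MA s h Rm e)ᵀ)
      + τ e • (X0 * MB s h tm e * (MB s h tm e)ᵀ))

lemma trace_G (X0 V : Matrix (Fin d) (PGOCols n d) ℝ) :
    Matrix.trace ((Gmat s h κ τ Rm tm X0)ᵀ * V) = LinF s h κ τ Rm tm X0 V := by
  rw [ip_eq_trace]
  have h1 : ip (Gmat s h κ τ Rm tm X0) V = ipl V (Gmat s h κ τ Rm tm X0) := rfl
  rw [h1, Gmat, map_sum]
  refine Finset.sum_congr rfl fun e _ => ?_
  rw [map_add, _root_.map_smul, _root_.map_smul]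
  show κ e • ip (X0 * MA s h Rm e * (MA s h Rm e)ᵀ) V
      + τ e • ip (X0 * MB s h tm e * (MB s h tm e)ᵀ) V = _
  rw [← ip_mul_right, ← ip_mul_right]
  simp [smul_eq_mul]

def Omat : Matrix (PGOCols n d) (PGOCols n d) ℝ :=
  ∑ e, (κ e • (MA s h Rm e * (MA s h Rm e)ᵀ + MS s h Rm e * (MS s h Rm e)ᵀ)
      + τ e • (MB s h tm e * (MB s h tm e)ᵀ + MT s h tm e * (MT s h tm e)ᵀ))

lemma Omat_psd (hκ : ∀ e, 0 < κ e) (hτ : ∀ e, 0 < τ e) :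
    (Omat s h κ τ Rm tm).PosSemidef :=
  psd_sum _ fun e => psd_add
    (psd_smul (psd_add (psd_mul_transpose _) (psd_mul_transpose _)) (hκ e).le)
    (psd_smul (psd_add (psd_mul_transpose _) (psd_mul_transpose _)) (hτ e).le)

lemma trace_Omat (V : Matrix (Fin d) (PGOCols n d) ℝ) :
    Matrix.trace (V * Omat s h κ τ Rm tm * Vᵀ)
      = ∑ e, (κ e * (‖V * MA s h Rm e‖^2 + ‖V * MS s h Rm e‖^2)
            + τ e * (‖V * MB s h tm e‖^2 + ‖V * MT s h tm e‖^2)) := by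
  rw [Omat]
  simp only [Matrix.mul_sum, Matrix.sum_mul, Matrix.trace_sum]
  refine Finset.sum_congr rfl fun e _ => ?_
  simp only [Matrix.mul_add, Matrix.add_mul, Matrix.mul_smul, Matrix.smul_mul,
    Matrix.trace_add, Matrix.trace_smul, smul_eq_mul]
  rw [tr_conj_sq, tr_conj_sq, tr_conj_sq, tr_conj_sq]

lemma midpoint_sq {m k : Type*} [Fintype m] [Fintype k] (x y x0 y0 : Matrix m k ℝ) :
    ‖x - ((1/2:ℝ) • x0 + (1/2:ℝ) • y0)‖^2 + ‖y - ((1/2:ℝ) • x0 + (1/2:ℝ) • y0)‖^2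
      = (1/2) * ‖x - y‖^2 + (1/2) * ‖(x - x0) + (y - y0)‖^2 := by
  simp only [fnorm_sq, Matrix.sub_apply, Matrix.add_apply, Matrix.smul_apply, smul_eq_mul,
    Finset.mul_sum]
  rw [← Finset.sum_add_distrib, ← Finset.sum_add_distrib]
  refine Finset.sum_congr rfl fun i _ => ?_
  rw [← Finset.sum_add_distrib, ← Finset.sum_add_distrib]
  exact Finset.sum_congr rfl fun j _ => by ring

lemma pgoH_eq (X0 X : Matrix (Fin d) (PGOCols n d) ℝ) :
    pgoH s h κ τ Rm tm X0 X
      = ∑ e, (κ e * ((1/2) * ‖X * MA s h Rm e‖^2 + (1/2) * ‖(X - X0) * MS s h Rm e‖^2)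
            + τ e * ((1/2) * ‖X * MB s h tm e‖^2 + (1/2) * ‖(X - X0) * MT s h tm e‖^2)) := by
  unfold pgoH
  refine Finset.sum_congr rfl fun e _ => ?_
  have hP : pgoP s h Rm X0 e
      = (1/2:ℝ) • (RPart X0 (s e) * Rm e) + (1/2:ℝ) • RPart X0 (h e) := rfl
  have hp : pgop s h tm X0 e
      = (1/2:ℝ) • (RPart X0 (s e) * tm e + tPart X0 (s e)) + (1/2:ℝ) • tPart X0 (h e) := by
    unfold pgop; rw [smul_add]
  rw [hP, hp, midpoint_sq, midpoint_sq, mulMA, mulMB, mulMS, mulMT]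

lemma main_id (X0 V : Matrix (Fin d) (PGOCols n d) ℝ) :
    pgoH s h κ τ Rm tm X0 (X0 + V)
      = pgoF s h κ τ Rm tm X0 + LinF s h κ τ Rm tm X0 V
        + (1/2) * ∑ e, (κ e * (‖V * MA s h Rm e‖^2 + ‖V * MS s h Rm e‖^2)
            + τ e * (‖V * MB s h tm e‖^2 + ‖V * MT s h tm e‖^2)) := by
  rw [pgoH_eq]
  have hV : X0 + V - X0 = V := by abel
  rw [hV]
  have hsplit : ∑ e, (κ e * ((1/2) * ‖(X0 + V) * MA s h Rm e‖^2
            + (1/2) * ‖V * MS s h Rm e‖^2)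
        + τ e * ((1/2) * ‖(X0 + V) * MB s h tm e‖^2 + (1/2) * ‖V * MT s h tm e‖^2))
      = (∑ e, (1/2) * (κ e * ‖(X0 + V) * MA s h Rm e‖^2
            + τ e * ‖(X0 + V) * MB s h tm e‖^2))
        + ∑ e, (κ e * ((1/2) * ‖V * MS s h Rm e‖^2)
            + τ e * ((1/2) * ‖V * MT s h tm e‖^2)) := by
    rw [← Finset.sum_add_distrib]
    exact Finset.sum_congr rfl fun e _ => by ring
  rw [hsplit, ← pgoF_eq s h κ τ Rm tm (X0 + V), pgoF_expand,
    pgoF_eq s h κ τ Rm tm V]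
  rw [add_assoc, ← Finset.sum_add_distrib, Finset.mul_sum]
  congr 1
  exact Finset.sum_congr rfl fun e _ => by ring

end Main

end PGOAux

/-- Theorem 1 of the paper: the surrogate `H` built at `X⁰` equals the first-order
expansion of `F` at `X⁰` plus a quadratic form given by a symmetric positive semidefinite
matrix `Ω̃ ∈ ℝ^{(d+1)n×(d+1)n}`; here `G = ∇F(X⁰)` is the (Fréchet) gradient of `F` at
`X⁰` with respect to the trace (Frobenius) inner product. -/
theorem pgo_surrogate_eq_first_order_plus_quadratic {n d : ℕ} {E : Type*} [Fintype E]
    (s h : E → Fin n) (κ τ : E → ℝ) (hκ : ∀ e, 0 < κ e) (hτ : ∀ e, 0 < τ e)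
    (Rm : E → Matrix (Fin d) (Fin d) ℝ) (hRm : ∀ e, Rm e * (Rm e)ᵀ = 1)
    (tm : E → Matrix (Fin d) (Fin 1) ℝ)
    (X0 : Matrix (Fin d) (PGOCols n d) ℝ) :
    ∃ Ω : Matrix (PGOCols n d) (PGOCols n d) ℝ, Ω.PosSemidef ∧
      ∃ G : Matrix (Fin d) (PGOCols n d) ℝ,
        DifferentiableAt ℝ (pgoF s h κ τ Rm tm) X0 ∧
        (∀ V : Matrix (Fin d) (PGOCols n d) ℝ,
          fderiv ℝ (pgoF s h κ τ Rm tm) X0 V = Matrix.trace (Gᵀ * V)) ∧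
        ∀ X : Matrix (Fin d) (PGOCols n d) ℝ,
          pgoH s h κ τ Rm tm X0 X =
            pgoF s h κ τ Rm tm X0 + Matrix.trace (Gᵀ * (X - X0))
              + (1 / 2) * Matrix.trace ((X - X0) * Ω * (X - X0)ᵀ) := by
  classical
  refine ⟨PGOAux.Omat s h κ τ Rm tm, PGOAux.Omat_psd s h κ τ Rm tm hκ hτ,
    PGOAux.Gmat s h κ τ Rm tm X0, (PGOAux.pgoF_diff s h κ τ Rm tm).differentiableAt,
    fun V => (PGOAux.pgoF_fderiv s h κ τ Rm tm X0 V).trans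
      (PGOAux.trace_G s h κ τ Rm tm X0 V).symm, fun X => ?_⟩
  have hX : X0 + (X - X0) = X := by abel
  have hmain := PGOAux.main_id s h κ τ Rm tm X0 (X - X0)
  rw [hX] at hmain
  rw [hmain, PGOAux.trace_G, PGOAux.trace_Omat]

end PGO
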